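/- arXiv:1211.1912 — 7 statements merged into one kernel-verified Lean document; each statement's English description precedes it below -/
import Mathlib

section
/- Fix a positive integer n, a real number ε > 0 with a, b real with 0 ≤ a < b, and a family of probability measures μ_θ on ℤ for θ ∈ [a,b] such that for all integers k ≤ l, the map θ ↦ μ_θ({m ∈ ℤ : k ≤ m ≤ l}) is continuous and unimodal on [a,b]. Define the coverage probability C(θ) = μ_θ({m ∈ ℤ : |m/n − θ| < ε}). Then the infimum of C over [a,b] is attained, and it is attained at some point of the finite set S = {a, b} ∪ {ℓ/n + ε : ℓ ∈ ℤ, ℓ/n + ε ∈ (a,b)} ∪ {ℓ/n − ε : ℓ ∈ ℤ, ℓ/n − ε ∈ (a,b)}; moreover S has fewer than 2n(b−a) + 4 elements. -/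
open MeasureTheory Set

private lemma aux_bp_count (n : ℕ) (hn : 0 < n) (c a b : ℝ) (hab : a < b) :
    ({x : ℝ | ∃ ℓ : ℤ, x = (ℓ : ℝ) / n + c ∧ x ∈ Set.Ioo a b}).Finite ∧
    (({x : ℝ | ∃ ℓ : ℤ, x = (ℓ : ℝ) / n + c ∧ x ∈ Set.Ioo a b}).ncard : ℝ)
      < n * (b - a) + 1 := by
  have hn' : (0:ℝ) < n := by exact_mod_cast hn
  set L : Set ℤ := {ℓ : ℤ | (ℓ:ℝ)/n + c ∈ Set.Ioo a b} with hL
  have hLsub : L ⊆ Set.Ioo ⌊(n:ℝ)*(a - c)⌋ ⌈(n:ℝ)*(b - c)⌉ := by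
    intro ℓ hℓ
    obtain ⟨h1, h2⟩ := hℓ
    constructor
    · rw [Int.floor_lt]
      have := (lt_div_iff₀ hn').mp (show a - c < (ℓ:ℝ)/n by linarith)
      nlinarith [this]
    · rw [Int.lt_ceil]
      have := (div_lt_iff₀ hn').mp (show (ℓ:ℝ)/n < b - c by linarith)
      nlinarith [this]
  have hIoo : (Set.Ioo ⌊(n:ℝ)*(a - c)⌋ ⌈(n:ℝ)*(b - c)⌉).Finite := Set.finite_Ioo _ _
  have hLfin : L.Finite := hIoo.subset hLsub
  have hsub : {x : ℝ | ∃ ℓ : ℤ, x = (ℓ : ℝ) / n + c ∧ x ∈ Set.Ioo a b}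
      ⊆ (fun ℓ : ℤ => (ℓ:ℝ)/n + c) '' L := by
    rintro x ⟨ℓ, rfl, hx⟩
    exact ⟨ℓ, hx, rfl⟩
  refine ⟨(hLfin.image _).subset hsub, ?_⟩
  have h1 : ({x : ℝ | ∃ ℓ : ℤ, x = (ℓ : ℝ) / n + c ∧ x ∈ Set.Ioo a b}).ncard
      ≤ ((fun ℓ : ℤ => (ℓ:ℝ)/n + c) '' L).ncard :=
    Set.ncard_le_ncard hsub (hLfin.image _)
  have h2 : ((fun ℓ : ℤ => (ℓ:ℝ)/n + c) '' L).ncard ≤ L.ncard :=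
    Set.ncard_image_le hLfin
  have h3 : L.ncard ≤ (Set.Ioo ⌊(n:ℝ)*(a - c)⌋ ⌈(n:ℝ)*(b - c)⌉).ncard :=
    Set.ncard_le_ncard hLsub hIoo
  have h4 : (Set.Ioo ⌊(n:ℝ)*(a - c)⌋ ⌈(n:ℝ)*(b - c)⌉).ncard
      = (⌈(n:ℝ)*(b - c)⌉ - ⌊(n:ℝ)*(a - c)⌋ - 1).toNat := by
    rw [← Finset.coe_Ioo, Set.ncard_coe_finset, Int.card_Ioo]
  have hkey : ((⌈(n:ℝ)*(b - c)⌉ - ⌊(n:ℝ)*(a - c)⌋ - 1).toNat : ℝ) < n * (b - a) + 1 := by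
    rcases le_or_gt (⌈(n:ℝ)*(b - c)⌉ - ⌊(n:ℝ)*(a - c)⌋ - 1) 0 with h | h
    · rw [Int.toNat_of_nonpos h]
      push_cast
      nlinarith
    · have hc : ((⌈(n:ℝ)*(b - c)⌉ - ⌊(n:ℝ)*(a - c)⌋ - 1).toNat : ℝ)
          = ((⌈(n:ℝ)*(b - c)⌉ : ℝ) - (⌊(n:ℝ)*(a - c)⌋ : ℝ) - 1) := by
        have := Int.toNat_of_nonneg h.le
        exact_mod_cast congrArg (fun z : ℤ => (z : ℝ)) this
      rw [hc]
      have hceil := Int.ceil_lt_add_one ((n:ℝ)*(b - c))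
      have hfloor := Int.sub_one_lt_floor ((n:ℝ)*(a - c))
      nlinarith
    
  calc (({x : ℝ | ∃ ℓ : ℤ, x = (ℓ : ℝ) / n + c ∧ x ∈ Set.Ioo a b}).ncard : ℝ)
      ≤ ((⌈(n:ℝ)*(b - c)⌉ - ⌊(n:ℝ)*(a - c)⌋ - 1).toNat : ℝ) := by
        exact_mod_cast (h1.trans (h2.trans h3)).trans (le_of_eq h4)
    _ < n * (b - a) + 1 := hkey

private lemma mem_I_aux (n : ℕ) (hn' : (0:ℝ) < n) (ε t : ℝ) (m : ℤ) :
    |(m:ℝ)/n - t| < ε ↔ (n:ℝ)*t - n*ε < m ∧ (m:ℝ) < n*t + n*ε := by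
  have h : (m:ℝ)/n - t = ((m:ℝ) - n*t)/n := by field_simp
  rw [abs_lt, h, div_lt_iff₀ hn', lt_div_iff₀ hn']
  constructor <;> rintro ⟨h1, h2⟩ <;> constructor <;> nlinarith
/-- Exact minimization of coverage probability for absolute error control
(Theorem 1 of Chen & Chen): under continuity and unimodality of interval
probabilities, the minimum of the coverage probability
`C(θ) = P(|Y_n/n − θ| < ε | θ)` over `θ ∈ [a,b]` is attained on the finite set
`{a,b} ∪ {ℓ/n + ε ∈ (a,b)} ∪ {ℓ/n − ε ∈ (a,b)}`, which has fewer than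
`2n(b−a) + 4` elements. -/
theorem coverage_min_absolute_error
    (n : ℕ) (hn : 0 < n) (ε : ℝ) (hε : 0 < ε)
    (a b : ℝ) (ha : 0 ≤ a) (hab : a < b)
    (μ : ℝ → Measure ℤ)
    (hprob : ∀ θ ∈ Icc a b, IsProbabilityMeasure (μ θ))
    (hcont : ∀ k l : ℤ, k ≤ l →
      ContinuousOn (fun θ => (μ θ {m : ℤ | k ≤ m ∧ m ≤ l}).toReal) (Icc a b))
    (hunim : ∀ k l : ℤ, k ≤ l → ∃ x ∈ Icc a b,
      MonotoneOn (fun θ => (μ θ {m : ℤ | k ≤ m ∧ m ≤ l}).toReal) (Icc a x) ∧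
      AntitoneOn (fun θ => (μ θ {m : ℤ | k ≤ m ∧ m ≤ l}).toReal) (Icc x b)) :
    let C : ℝ → ℝ := fun θ => (μ θ {m : ℤ | |(m : ℝ) / n - θ| < ε}).toReal
    let S : Set ℝ := {a, b} ∪ {x : ℝ | ∃ ℓ : ℤ, x = (ℓ : ℝ) / n + ε ∧ x ∈ Ioo a b}
      ∪ {x : ℝ | ∃ ℓ : ℤ, x = (ℓ : ℝ) / n - ε ∧ x ∈ Ioo a b}
    S.Finite ∧ (S.ncard : ℝ) < 2 * n * (b - a) + 4 ∧
      ∃ θ₀ ∈ S, ∀ θ ∈ Icc a b, C θ₀ ≤ C θ := by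
  intro C S
  have hn' : (0:ℝ) < n := by exact_mod_cast hn
  have hC_def : C = fun θ => (μ θ {m : ℤ | |(m : ℝ) / n - θ| < ε}).toReal := rfl
  have hS_def : S = ({a, b} ∪ {x : ℝ | ∃ ℓ : ℤ, x = (ℓ : ℝ) / n + ε ∧ x ∈ Ioo a b})
      ∪ {x : ℝ | ∃ ℓ : ℤ, x = (ℓ : ℝ) / n - ε ∧ x ∈ Ioo a b} := rfl
  clear_value C S
  -- counting the breakpoint sets
  obtain ⟨hAfin, hAcard⟩ := aux_bp_count n hn ε a b hab
  have hBeq : {x : ℝ | ∃ ℓ : ℤ, x = (ℓ : ℝ) / n - ε ∧ x ∈ Ioo a b}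
      = {x : ℝ | ∃ ℓ : ℤ, x = (ℓ : ℝ) / n + (-ε) ∧ x ∈ Ioo a b} := by
    simp only [sub_eq_add_neg]
  obtain ⟨hBfin', hBcard'⟩ := aux_bp_count n hn (-ε) a b hab
  have hBfin : ({x : ℝ | ∃ ℓ : ℤ, x = (ℓ : ℝ) / n - ε ∧ x ∈ Ioo a b}).Finite := by
    rw [hBeq]; exact hBfin'
  have hBcard : (({x : ℝ | ∃ ℓ : ℤ, x = (ℓ : ℝ) / n - ε ∧ x ∈ Ioo a b}).ncard : ℝ)
      < n * (b - a) + 1 := by rw [hBeq]; exact hBcard'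
  have habfin : ({a, b} : Set ℝ).Finite := (Set.finite_singleton b).insert a
  have hSfin : S.Finite := by
    rw [hS_def]; exact (habfin.union hAfin).union hBfin
  have haS : a ∈ S := by rw [hS_def]; left; left; left; rfl
  have hbS : b ∈ S := by rw [hS_def]; left; left; right; rfl
  -- cardinality bound
  have hcard : (S.ncard : ℝ) < 2 * n * (b - a) + 4 := by
    have h1 := Set.ncard_union_le ({a, b} ∪ {x : ℝ | ∃ ℓ : ℤ, x = (ℓ : ℝ) / n + ε ∧ x ∈ Ioo a b})
      {x : ℝ | ∃ ℓ : ℤ, x = (ℓ : ℝ) / n - ε ∧ x ∈ Ioo a b}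
    have h2 := Set.ncard_union_le ({a, b} : Set ℝ)
      {x : ℝ | ∃ ℓ : ℤ, x = (ℓ : ℝ) / n + ε ∧ x ∈ Ioo a b}
    have h3 : ({a, b} : Set ℝ).ncard ≤ 2 := by
      have := Set.ncard_insert_le a ({b} : Set ℝ)
      simpa [Set.ncard_singleton] using this
    have hnat := le_trans h1 (add_le_add_left (le_trans h2 (add_le_add_left h3 _)) _)
    rw [hS_def]
    calc ((({a, b} ∪ {x : ℝ | ∃ ℓ : ℤ, x = (ℓ : ℝ) / n + ε ∧ x ∈ Ioo a b}
          ∪ {x : ℝ | ∃ ℓ : ℤ, x = (ℓ : ℝ) / n - ε ∧ x ∈ Ioo a b}).ncard : ℝ))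
        ≤ ((2 + ({x : ℝ | ∃ ℓ : ℤ, x = (ℓ : ℝ) / n + ε ∧ x ∈ Ioo a b}).ncard
          + ({x : ℝ | ∃ ℓ : ℤ, x = (ℓ : ℝ) / n - ε ∧ x ∈ Ioo a b}).ncard : ℕ) : ℝ) := by
          exact_mod_cast hnat
      _ < 2 * n * (b - a) + 4 := by push_cast; linarith
  -- minimizer over S
  obtain ⟨θ₀, hθ₀S, hθ₀min⟩ := Set.exists_min_image S C hSfin ⟨a, haS⟩
  refine ⟨hSfin, hcard, θ₀, hθ₀S, ?_⟩
  intro θ hθ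
  by_cases hθS : θ ∈ S
  · exact hθ₀min θ hθS
  have haθ : a < θ := lt_of_le_of_ne hθ.1 (fun h => hθS (h ▸ haS))
  have hθb : θ < b := lt_of_le_of_ne hθ.2 (fun h => hθS (h.symm ▸ hbS))
  -- p : largest point of S left of θ ; q : smallest right of θ
  obtain ⟨p, hpT, hpmax⟩ := Set.exists_max_image (S ∩ Icc a θ) id
    (hSfin.inter_of_left _) ⟨a, haS, le_refl a, haθ.le⟩
  obtain ⟨q, hqT, hqmin⟩ := Set.exists_min_image (S ∩ Icc θ b) id
    (hSfin.inter_of_left _) ⟨b, hbS, hθb.le, le_refl b⟩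
  have hpa : a ≤ p := hpT.2.1
  have hqb : q ≤ b := hqT.2.2
  have hpθ : p < θ := lt_of_le_of_ne hpT.2.2 (fun h => hθS (h ▸ hpT.1))
  have hθq : θ < q := lt_of_le_of_ne hqT.2.1 (fun h => hθS (h.symm ▸ hqT.1))
  have hpmem : p ∈ Icc a b := ⟨hpa, hpT.2.2.trans hθb.le⟩
  have hqmem : q ∈ Icc a b := ⟨haθ.le.trans hqT.2.1, hqb⟩
  haveI := hprob p hpmem
  haveI := hprob q hqmem
  -- no breakpoints in (p, θ] of + form, nor in [θ, q) of - form
  have hnb1 : ∀ ℓ : ℤ, ¬ ((ℓ:ℝ)/n + ε ∈ Ioc p θ) := by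
    rintro ℓ ⟨h1, h2⟩
    have hsS : (ℓ:ℝ)/n + ε ∈ S := by
      rw [hS_def]; left; right
      exact ⟨ℓ, rfl, lt_of_le_of_lt hpa h1, lt_of_le_of_lt h2 hθb⟩
    have := hpmax _ ⟨hsS, hpa.trans h1.le, h2⟩
    simp only [id] at this
    linarith
  have hnb2 : ∀ ℓ : ℤ, ¬ ((ℓ:ℝ)/n - ε ∈ Ico θ q) := by
    rintro ℓ ⟨h1, h2⟩
    have hsS : (ℓ:ℝ)/n - ε ∈ S := by
      rw [hS_def]; right
      exact ⟨ℓ, rfl, lt_of_lt_of_le haθ h1, lt_of_lt_of_le h2 hqb⟩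
    have := hqmin _ ⟨hsS, h1, h2.le.trans hqb⟩
    simp only [id] at this
    linarith
  -- set inclusions
  have hsubp : {m : ℤ | |(m:ℝ)/n - p| < ε} ⊆ {m : ℤ | |(m:ℝ)/n - θ| < ε} := by
    intro m hm
    rw [mem_setOf_eq, mem_I_aux n hn'] at hm ⊢
    obtain ⟨h1, h2⟩ := hm
    refine ⟨?_, by
      have hh := mul_le_mul_of_nonneg_left hpθ.le hn'.le
      linarith⟩
    by_contra hcon
    push_neg at hcon
    refine hnb1 m ⟨?_, ?_⟩
    · have h := (lt_div_iff₀ hn').mpr (show (p - ε) * n < (m:ℝ) by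
        have hr : (p - ε) * n = (n:ℝ)*p - n*ε := by ring
        linarith)
      linarith
    · have h := (div_le_iff₀ hn').mpr (show (m:ℝ) ≤ (θ - ε) * n by
        have hr : (θ - ε) * n = (n:ℝ)*θ - n*ε := by ring
        linarith)
      linarith
  have hsubq : {m : ℤ | |(m:ℝ)/n - q| < ε} ⊆ {m : ℤ | |(m:ℝ)/n - θ| < ε} := by
    intro m hm
    rw [mem_setOf_eq, mem_I_aux n hn'] at hm ⊢
    obtain ⟨h1, h2⟩ := hm
    refine ⟨by
      have hh := mul_le_mul_of_nonneg_left hθq.le hn'.le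
      linarith, ?_⟩
    by_contra hcon
    push_neg at hcon
    refine hnb2 m ⟨?_, ?_⟩
    · have h := (le_div_iff₀ hn').mpr (show (θ + ε) * n ≤ (m:ℝ) by
        have hr : (θ + ε) * n = (n:ℝ)*θ + n*ε := by ring
        linarith)
      linarith
    · have h := (div_lt_iff₀ hn').mpr (show (m:ℝ) < (q + ε) * n by
        have hr : (q + ε) * n = (n:ℝ)*q + n*ε := by ring
        linarith)
      linarith
  -- case on emptiness of the coverage set at θ
  rcases Set.eq_empty_or_nonempty {m : ℤ | |(m:ℝ)/n - θ| < ε} with hemp | ⟨m₀, hm₀⟩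
  · have hCθ : C θ = 0 := by
      simp only [hC_def]
      rw [hemp]; simp
    have hIp : {m : ℤ | |(m:ℝ)/n - p| < ε} = ∅ :=
      Set.subset_empty_iff.mp (hemp ▸ hsubp)
    have hCp : C p = 0 := by
      simp only [hC_def]
      rw [hIp]; simp
    have := hθ₀min p hpT.1
    linarith
  · set k : ℤ := ⌊(n:ℝ)*θ - n*ε⌋ + 1 with hk
    set l : ℤ := ⌈(n:ℝ)*θ + n*ε⌉ - 1 with hl
    have hIθ : {m : ℤ | |(m:ℝ)/n - θ| < ε} = {m : ℤ | k ≤ m ∧ m ≤ l} := by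
      ext m
      rw [mem_setOf_eq, mem_setOf_eq, mem_I_aux n hn']
      constructor
      · rintro ⟨h1, h2⟩
        exact ⟨Int.add_one_le_iff.mpr (Int.floor_lt.mpr h1),
          Int.le_sub_one_iff.mpr (Int.lt_ceil.mpr h2)⟩
      · rintro ⟨h1, h2⟩
        exact ⟨Int.floor_lt.mp (Int.add_one_le_iff.mp h1),
          Int.lt_ceil.mp (Int.le_sub_one_iff.mp h2)⟩
    have hkl : k ≤ l := by
      have := hIθ ▸ hm₀
      exact this.1.trans this.2
    obtain ⟨x, hx, hmono, hanti⟩ := hunim k l hkl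
    set F : ℝ → ℝ := fun t => (μ t {m : ℤ | k ≤ m ∧ m ≤ l}).toReal with hF
    have hCθF : C θ = F θ := by
      simp only [hC_def, hF]
      rw [hIθ]
    have hCpF : C p ≤ F p := by
      simp only [hC_def, hF]
      exact ENNReal.toReal_mono (measure_ne_top _ _) (measure_mono (hIθ ▸ hsubp))
    have hCqF : C q ≤ F q := by
      simp only [hC_def, hF]
      exact ENNReal.toReal_mono (measure_ne_top _ _) (measure_mono (hIθ ▸ hsubq))
    rcases le_or_gt θ x with hθx | hxθ
    · have hFp : F p ≤ F θ := hmono ⟨hpa, hpθ.le.trans hθx⟩ ⟨hθ.1, hθx⟩ hpθ.le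
      have := hθ₀min p hpT.1
      linarith
    · have hFq : F q ≤ F θ := hanti ⟨hxθ.le, hθ.2⟩ ⟨hxθ.le.trans hθq.le, hqb⟩ hθq.le
      have := hθ₀min q hqT.1
      linarith
end

section
/- Fix a positive integer n, a real number ε with 0 < ε < 1, reals a, b with 0 < a < b, and a family of probability measures μ_θ on ℤ for θ ∈ [a,b] such that for all integers k ≤ l, the map θ ↦ μ_θ({m ∈ ℤ : k ≤ m ≤ l}) is continuous and unimodal on [a,b]. Define the coverage probability C(θ) = μ_θ({m ∈ ℤ : |m/n − θ| < ε·θ}). Then the infimum of C over [a,b] is attained, and it is attained at some point of the finite set S = {a, b} ∪ {ℓ/(n(1+ε)) : ℓ ∈ ℤ, ℓ/(n(1+ε)) ∈ (a,b)} ∪ {ℓ/(n(1−ε)) : ℓ ∈ ℤ, ℓ/(n(1−ε)) ∈ (a,b)}; moreover S has fewer than 2n(b−a) + 4 elements. -/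
open MeasureTheory Set

lemma grid_finite_card (c a b : ℝ) (hc : 0 < c) (hab : a < b) :
    {x : ℝ | ∃ ℓ : ℤ, x = (ℓ : ℝ) / c ∧ x ∈ Ioo a b}.Finite ∧
    (({x : ℝ | ∃ ℓ : ℤ, x = (ℓ : ℝ) / c ∧ x ∈ Ioo a b}.ncard : ℝ) < c * (b - a) + 1) := by
  set T := {x : ℝ | ∃ ℓ : ℤ, x = (ℓ : ℝ) / c ∧ x ∈ Ioo a b} with hT
  have hsub : T ⊆ (fun ℓ : ℤ => (ℓ : ℝ) / c) '' (Set.Icc (⌊c * a⌋ + 1) (⌈c * b⌉ - 1)) := by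
    rintro x ⟨ℓ, rfl, hx1, hx2⟩
    refine ⟨ℓ, ⟨?_, ?_⟩, rfl⟩
    · have h1 : c * a < ℓ := by
        have := (lt_div_iff₀ hc).mp hx1
        linarith [this]
      have := Int.floor_lt.mpr h1
      omega
    · have h2 : (ℓ : ℝ) < c * b := by
        have := (div_lt_iff₀ hc).mp hx2
        linarith [this]
      have := Int.lt_ceil.mpr h2
      omega
  have hfin : T.Finite := ((Set.finite_Icc _ _).image _).subset hsub
  refine ⟨hfin, ?_⟩
  have h1 : T.ncard ≤ (Set.Icc (⌊c * a⌋ + 1) (⌈c * b⌉ - 1)).ncard := by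
    calc T.ncard ≤ ((fun ℓ : ℤ => (ℓ : ℝ) / c) '' (Set.Icc (⌊c * a⌋ + 1) (⌈c * b⌉ - 1))).ncard :=
          Set.ncard_le_ncard hsub ((Set.finite_Icc _ _).image _)
      _ ≤ _ := Set.ncard_image_le (Set.finite_Icc _ _)
  have h2 : (Set.Icc (⌊c * a⌋ + 1) (⌈c * b⌉ - 1)).ncard = (⌈c * b⌉ - 1 - ⌊c * a⌋).toNat := by
    rw [← Finset.coe_Icc, Set.ncard_coe_finset, Int.card_Icc]
    congr 1
    ring
  have hcb : (⌈c * b⌉ : ℝ) < c * b + 1 := Int.ceil_lt_add_one _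
  have hca : c * a - 1 < (⌊c * a⌋ : ℝ) := Int.sub_one_lt_floor _
  rcases le_or_gt (⌈c * b⌉ - 1 - ⌊c * a⌋) 0 with h | h
  · have : (Set.Icc (⌊c * a⌋ + 1) (⌈c * b⌉ - 1)).ncard = 0 := by rw [h2]; omega
    have hT0 : (T.ncard : ℝ) ≤ 0 := by
      have := h1.trans this.le
      exact_mod_cast this
    nlinarith
  · have h3 : ((⌈c * b⌉ - 1 - ⌊c * a⌋).toNat : ℝ) = (⌈c * b⌉ : ℝ) - 1 - ⌊c * a⌋ := by
      have h5 : (((⌈c * b⌉ - 1 - ⌊c * a⌋).toNat : ℤ) : ℝ) = ((⌈c * b⌉ - 1 - ⌊c * a⌋ : ℤ) : ℝ) :=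
        congrArg _ (Int.toNat_of_nonneg h.le)
      push_cast at h5
      linarith [h5]
    have : (T.ncard : ℝ) ≤ ((⌈c * b⌉ - 1 - ⌊c * a⌋).toNat : ℝ) := by
      exact_mod_cast h1.trans h2.le
    rw [h3] at this
    nlinarith

lemma tri_ncard {α : Type*} (s t u : Set α) :
    (s ∪ t ∪ u).ncard ≤ s.ncard + t.ncard + u.ncard :=
  (Set.ncard_union_le _ _).trans (Nat.add_le_add_right (Set.ncard_union_le _ _) _)

/-- Exact minimization of coverage probability for relative error control
(Theorem 2 of Chen & Chen): under continuity and unimodality of interval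
probabilities, the minimum of the coverage probability
`C(θ) = P(|Y_n/n − θ| < εθ | θ)` over `θ ∈ [a,b]` is attained on the finite set
`{a,b} ∪ {ℓ/(n(1+ε)) ∈ (a,b)} ∪ {ℓ/(n(1−ε)) ∈ (a,b)}`, which has fewer than
`2n(b−a) + 4` elements. -/
theorem coverage_min_relative_error
    (n : ℕ) (hn : 0 < n) (ε : ℝ) (hε0 : 0 < ε) (hε1 : ε < 1)
    (a b : ℝ) (ha : 0 < a) (hab : a < b)
    (μ : ℝ → Measure ℤ)
    (hprob : ∀ θ ∈ Icc a b, IsProbabilityMeasure (μ θ))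
    (hcont : ∀ k l : ℤ, k ≤ l →
      ContinuousOn (fun θ => (μ θ {m : ℤ | k ≤ m ∧ m ≤ l}).toReal) (Icc a b))
    (hunim : ∀ k l : ℤ, k ≤ l → ∃ x ∈ Icc a b,
      MonotoneOn (fun θ => (μ θ {m : ℤ | k ≤ m ∧ m ≤ l}).toReal) (Icc a x) ∧
      AntitoneOn (fun θ => (μ θ {m : ℤ | k ≤ m ∧ m ≤ l}).toReal) (Icc x b)) :
    let C : ℝ → ℝ := fun θ => (μ θ {m : ℤ | |(m : ℝ) / n - θ| < ε * θ}).toReal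
    let S : Set ℝ := {a, b}
      ∪ {x : ℝ | ∃ ℓ : ℤ, x = (ℓ : ℝ) / (n * (1 + ε)) ∧ x ∈ Ioo a b}
      ∪ {x : ℝ | ∃ ℓ : ℤ, x = (ℓ : ℝ) / (n * (1 - ε)) ∧ x ∈ Ioo a b}
    S.Finite ∧ (S.ncard : ℝ) < 2 * n * (b - a) + 4 ∧
      ∃ θ₀ ∈ S, ∀ θ ∈ Icc a b, C θ₀ ≤ C θ := by
  intro C S
  have hn' : (0:ℝ) < (n:ℝ) := by exact_mod_cast hn
  have hd1 : (0:ℝ) < (n:ℝ) * (1 + ε) := by nlinarith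
  have hd2 : (0:ℝ) < (n:ℝ) * (1 - ε) := by nlinarith
  obtain ⟨hfin1, hcard1⟩ := grid_finite_card ((n:ℝ) * (1 + ε)) a b hd1 hab
  obtain ⟨hfin2, hcard2⟩ := grid_finite_card ((n:ℝ) * (1 - ε)) a b hd2 hab
  have hSdef : S = ({a, b} : Set ℝ)
      ∪ {x : ℝ | ∃ ℓ : ℤ, x = (ℓ : ℝ) / ((n:ℝ) * (1 + ε)) ∧ x ∈ Ioo a b}
      ∪ {x : ℝ | ∃ ℓ : ℤ, x = (ℓ : ℝ) / ((n:ℝ) * (1 - ε)) ∧ x ∈ Ioo a b} := rfl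
  have hSfin : S.Finite := by
    rw [hSdef]
    exact ((((Set.finite_singleton b).insert a).union hfin1).union hfin2)
  refine ⟨hSfin, ?_, ?_⟩
  · -- cardinality bound
    have htri := tri_ncard ({a, b} : Set ℝ)
      {x : ℝ | ∃ ℓ : ℤ, x = (ℓ : ℝ) / ((n:ℝ) * (1 + ε)) ∧ x ∈ Ioo a b}
      {x : ℝ | ∃ ℓ : ℤ, x = (ℓ : ℝ) / ((n:ℝ) * (1 - ε)) ∧ x ∈ Ioo a b}
    rw [← hSdef] at htri
    have hab2 : ({a, b} : Set ℝ).ncard ≤ 2 := by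
      simpa using Set.ncard_insert_le a ({b} : Set ℝ)
    have hnat : S.ncard ≤ 2
        + {x : ℝ | ∃ ℓ : ℤ, x = (ℓ : ℝ) / ((n:ℝ) * (1 + ε)) ∧ x ∈ Ioo a b}.ncard
        + {x : ℝ | ∃ ℓ : ℤ, x = (ℓ : ℝ) / ((n:ℝ) * (1 - ε)) ∧ x ∈ Ioo a b}.ncard := by
      omega
    have hreal : (S.ncard : ℝ) ≤ 2
        + ({x : ℝ | ∃ ℓ : ℤ, x = (ℓ : ℝ) / ((n:ℝ) * (1 + ε)) ∧ x ∈ Ioo a b}.ncard : ℝ)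
        + ({x : ℝ | ∃ ℓ : ℤ, x = (ℓ : ℝ) / ((n:ℝ) * (1 - ε)) ∧ x ∈ Ioo a b}.ncard : ℝ) := by
      exact_mod_cast hnat
    have hkey : ((n:ℝ) * (1 + ε)) * (b - a) + ((n:ℝ) * (1 - ε)) * (b - a)
        = 2 * (n:ℝ) * (b - a) := by ring
    linarith
  · -- minimum attained on S
    have hamem : a ∈ S := by
      rw [hSdef]
      exact Set.mem_union_left _ (Set.mem_union_left _ (Set.mem_insert _ _))
    have hbmem : b ∈ S := by
      rw [hSdef]
      exact Set.mem_union_left _ (Set.mem_union_left _ (Set.mem_insert_of_mem _ rfl))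
    have hSsub : S ⊆ Icc a b := by
      rw [hSdef]
      rintro x (((hx | hx) | ⟨ℓ, rfl, hx⟩) | ⟨ℓ, rfl, hx⟩)
      · exact ⟨(show x = a from hx).ge, (show x = a from hx).le.trans hab.le⟩
      · exact ⟨hab.le.trans (show x = b from hx).ge, (show x = b from hx).le⟩
      · exact ⟨hx.1.le, hx.2.le⟩
      · exact ⟨hx.1.le, hx.2.le⟩
    obtain ⟨θ₀, hθ₀S, hθ₀min⟩ := Set.exists_min_image S C hSfin ⟨a, hamem⟩
    refine ⟨θ₀, hθ₀S, ?_⟩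
    intro θ hθ
    by_cases hθS : θ ∈ S
    · exact hθ₀min θ hθS
    have hθa : a < θ := lt_of_le_of_ne hθ.1 (by rintro rfl; exact hθS hamem)
    have hθb : θ < b := lt_of_le_of_ne hθ.2 (by rintro rfl; exact hθS hbmem)
    obtain ⟨u, ⟨huS, huθ'⟩, humax⟩ :=
      Set.exists_max_image (S ∩ Iio θ) id (hSfin.inter_of_left _) ⟨a, hamem, hθa⟩
    obtain ⟨v, ⟨hvS, hvθ'⟩, hvmin⟩ :=
      Set.exists_min_image (S ∩ Ioi θ) id (hSfin.inter_of_left _) ⟨b, hbmem, hθb⟩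
    have huθ : u < θ := huθ'
    have hvθ : θ < v := hvθ'
    have huI : u ∈ Icc a b := hSsub huS
    have hvI : v ∈ Icc a b := hSsub hvS
    -- characterization of the coverage event
    have hEset : ∀ ψ : ℝ, {m : ℤ | |(m : ℝ) / n - ψ| < ε * ψ}
        = {m : ℤ | (n:ℝ) * (1 - ε) * ψ < m ∧ (m:ℝ) < (n:ℝ) * (1 + ε) * ψ} := by
      intro ψ
      ext m
      simp only [Set.mem_setOf_eq]
      rw [abs_lt]
      constructor
      · rintro ⟨h1, h2⟩
        constructor
        · have h3 : ψ - ε * ψ < (m:ℝ) / (n:ℝ) := by linarith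
          have h4 := (lt_div_iff₀ hn').mp h3
          nlinarith
        · have h3 : (m:ℝ) / (n:ℝ) < ψ + ε * ψ := by linarith
          have h4 := (div_lt_iff₀ hn').mp h3
          nlinarith
      · rintro ⟨h1, h2⟩
        constructor
        · have h3 : ψ - ε * ψ < (m:ℝ) / (n:ℝ) := (lt_div_iff₀ hn').mpr (by nlinarith)
          linarith
        · have h3 : (m:ℝ) / (n:ℝ) < ψ + ε * ψ := (div_lt_iff₀ hn').mpr (by nlinarith)
          linarith
    -- inclusion lemmas at the neighbouring grid points
    have hu_incl : {m : ℤ | (n:ℝ) * (1 - ε) * u < m ∧ (m:ℝ) < (n:ℝ) * (1 + ε) * u}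
        ⊆ {m : ℤ | (n:ℝ) * (1 - ε) * θ < m ∧ (m:ℝ) < (n:ℝ) * (1 + ε) * θ} := by
      rintro m ⟨h1, h2⟩
      refine ⟨?_, by nlinarith⟩
      by_contra hcon
      push_neg at hcon
      have hx1 : u < (m:ℝ) / ((n:ℝ) * (1 - ε)) := (lt_div_iff₀ hd2).mpr (by linarith)
      have hx2 : (m:ℝ) / ((n:ℝ) * (1 - ε)) ≤ θ := (div_le_iff₀ hd2).mpr (by linarith)
      have hxS : (m:ℝ) / ((n:ℝ) * (1 - ε)) ∈ S := by
        rw [hSdef]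
        exact Set.mem_union_right _
          ⟨m, rfl, lt_of_le_of_lt huI.1 hx1, lt_of_le_of_lt hx2 hθb⟩
      have hxne : (m:ℝ) / ((n:ℝ) * (1 - ε)) ≠ θ := fun h => hθS (h ▸ hxS)
      have hle : (m:ℝ) / ((n:ℝ) * (1 - ε)) ≤ u :=
        humax _ ⟨hxS, lt_of_le_of_ne hx2 hxne⟩
      linarith
    have hv_incl : {m : ℤ | (n:ℝ) * (1 - ε) * v < m ∧ (m:ℝ) < (n:ℝ) * (1 + ε) * v}
        ⊆ {m : ℤ | (n:ℝ) * (1 - ε) * θ < m ∧ (m:ℝ) < (n:ℝ) * (1 + ε) * θ} := by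
      rintro m ⟨h1, h2⟩
      refine ⟨by nlinarith, ?_⟩
      by_contra hcon
      push_neg at hcon
      have hx1 : θ ≤ (m:ℝ) / ((n:ℝ) * (1 + ε)) := (le_div_iff₀ hd1).mpr (by linarith)
      have hx2 : (m:ℝ) / ((n:ℝ) * (1 + ε)) < v := (div_lt_iff₀ hd1).mpr (by linarith)
      have hxS : (m:ℝ) / ((n:ℝ) * (1 + ε)) ∈ S := by
        rw [hSdef]
        exact Set.mem_union_left _ (Set.mem_union_right _
          ⟨m, rfl, lt_of_lt_of_le hθa hx1, lt_of_lt_of_le hx2 hvI.2⟩)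
      have hxne : (m:ℝ) / ((n:ℝ) * (1 + ε)) ≠ θ := fun h => hθS (h ▸ hxS)
      have hle : v ≤ (m:ℝ) / ((n:ℝ) * (1 + ε)) :=
        hvmin _ ⟨hxS, lt_of_le_of_ne hx1 (Ne.symm hxne)⟩
      linarith
    -- the event at θ is an integer interval
    set k : ℤ := ⌊(n:ℝ) * (1 - ε) * θ⌋ + 1 with hk
    set l : ℤ := ⌈(n:ℝ) * (1 + ε) * θ⌉ - 1 with hl
    have hinterval : {m : ℤ | (n:ℝ) * (1 - ε) * θ < m ∧ (m:ℝ) < (n:ℝ) * (1 + ε) * θ}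
        = {m : ℤ | k ≤ m ∧ m ≤ l} := by
      ext m
      simp only [Set.mem_setOf_eq, hk, hl]
      rw [← Int.floor_lt, ← Int.lt_ceil]
      omega
    have hCdef : ∀ ψ : ℝ, C ψ = (μ ψ {m : ℤ | |(m : ℝ) / n - ψ| < ε * ψ}).toReal :=
      fun _ => rfl
    by_cases hkl : k ≤ l
    · obtain ⟨x, hxI, hmono, hanti⟩ := hunim k l hkl
      have hCθ : C θ = (μ θ {m : ℤ | k ≤ m ∧ m ≤ l}).toReal := by
        rw [hCdef θ, hEset θ, hinterval]
      have hCu : C u ≤ (μ u {m : ℤ | k ≤ m ∧ m ≤ l}).toReal := by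
        rw [hCdef u, hEset u]
        have := hprob u huI
        exact ENNReal.toReal_mono (measure_ne_top _ _)
          (measure_mono (hinterval ▸ hu_incl))
      have hCv : C v ≤ (μ v {m : ℤ | k ≤ m ∧ m ≤ l}).toReal := by
        rw [hCdef v, hEset v]
        have := hprob v hvI
        exact ENNReal.toReal_mono (measure_ne_top _ _)
          (measure_mono (hinterval ▸ hv_incl))
      rcases le_total θ x with hxθ | hxθ
      · have hg : (μ u {m : ℤ | k ≤ m ∧ m ≤ l}).toReal
            ≤ (μ θ {m : ℤ | k ≤ m ∧ m ≤ l}).toReal :=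
          hmono ⟨huI.1, huθ.le.trans hxθ⟩ ⟨hθ.1, hxθ⟩ huθ.le
        calc C θ₀ ≤ C u := hθ₀min u huS
          _ ≤ (μ u {m : ℤ | k ≤ m ∧ m ≤ l}).toReal := hCu
          _ ≤ (μ θ {m : ℤ | k ≤ m ∧ m ≤ l}).toReal := hg
          _ = C θ := hCθ.symm
      · have hg : (μ v {m : ℤ | k ≤ m ∧ m ≤ l}).toReal
            ≤ (μ θ {m : ℤ | k ≤ m ∧ m ≤ l}).toReal :=
          hanti ⟨hxθ, hθ.2⟩ ⟨hxθ.trans hvθ.le, hvI.2⟩ hvθ.le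
        calc C θ₀ ≤ C v := hθ₀min v hvS
          _ ≤ (μ v {m : ℤ | k ≤ m ∧ m ≤ l}).toReal := hCv
          _ ≤ (μ θ {m : ℤ | k ≤ m ∧ m ≤ l}).toReal := hg
          _ = C θ := hCθ.symm
    · -- empty interval case
      have hempty : {m : ℤ | k ≤ m ∧ m ≤ l} = (∅ : Set ℤ) := by
        ext m
        simp only [Set.mem_setOf_eq, Set.mem_empty_iff_false, iff_false, not_and, not_le]
        omega
      have hCθ0 : C θ = 0 := by
        rw [hCdef θ, hEset θ, hinterval, hempty]
        simp
      have hCu0 : C u = 0 := by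
        rw [hCdef u, hEset u]
        have h0 : {m : ℤ | (n:ℝ) * (1 - ε) * u < m ∧ (m:ℝ) < (n:ℝ) * (1 + ε) * u}
            = (∅ : Set ℤ) :=
          Set.subset_empty_iff.mp (hempty ▸ hinterval ▸ hu_incl)
        rw [h0]
        simp
      calc C θ₀ ≤ C u := hθ₀min u huS
        _ = 0 := hCu0
        _ ≤ C θ := le_of_eq hCθ0.symm
end

section
/- Fix a positive integer n, a real ε > 0, reals a < b, and a family of probability measures μ_θ on ℤ for θ ∈ [a,b] such that for all integers k ≤ l, the map θ ↦ μ_θ({m ∈ ℤ : k ≤ m ≤ l}) is continuous on [a,b]. Define C(θ) = μ_θ({m ∈ ℤ : |m/n − θ| < ε}). Then for every θ ∈ (a,b), the one-sided limit lim_{η→0⁺} C(θ + η) exists and is ≥ C(θ), and the one-sided limit lim_{η→0⁺} C(θ − η) exists and is ≥ C(θ). -/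
open MeasureTheory Set Filter

lemma cov_mem_iff (n : ℕ) (hn : (0:ℝ) < n) (ε θ' : ℝ) (m : ℤ) :
    |(m : ℝ) / n - θ'| < ε ↔ (θ' - ε) * n < (m : ℝ) ∧ (m : ℝ) < (θ' + ε) * n := by
  rw [abs_lt]
  constructor
  · rintro ⟨h1, h2⟩
    constructor
    · have h3 : θ' - ε < (m : ℝ) / n := by linarith
      exact (lt_div_iff₀ hn).mp h3
    · have h3 : (m : ℝ) / n < θ' + ε := by linarith
      exact (div_lt_iff₀ hn).mp h3
  · rintro ⟨h1, h2⟩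
    have h3 := (lt_div_iff₀ hn).mpr h1
    have h4 := (div_lt_iff₀ hn).mpr h2
    constructor <;> linarith

/-- Lemma 4 of Chen & Chen: if for all integers `k ≤ l` the interval
probability `θ ↦ μ_θ{k ≤ m ≤ l}` is continuous on `[a,b]`, then the coverage
probability `C(θ) = μ_θ{|m/n − θ| < ε}` has one-sided limits from the right
and from the left at every `θ ∈ (a,b)`, both of which are `≥ C(θ)`. -/
theorem coverage_one_sided_limits_absolute_error
    (n : ℕ) (hn : 0 < n) (ε : ℝ) (hε : 0 < ε)
    (a b : ℝ) (hab : a < b)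
    (μ : ℝ → Measure ℤ)
    (hprob : ∀ θ ∈ Icc a b, IsProbabilityMeasure (μ θ))
    (hcont : ∀ k l : ℤ, k ≤ l →
      ContinuousOn (fun θ => (μ θ {m : ℤ | k ≤ m ∧ m ≤ l}).toReal) (Icc a b)) :
    let C : ℝ → ℝ := fun θ => (μ θ {m : ℤ | |(m : ℝ) / n - θ| < ε}).toReal
    ∀ θ ∈ Ioo a b,
      (∃ L : ℝ, Tendsto C (nhdsWithin θ (Ioi θ)) (nhds L) ∧ C θ ≤ L) ∧
      (∃ L : ℝ, Tendsto C (nhdsWithin θ (Iio θ)) (nhds L) ∧ C θ ≤ L) := by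
  intro C θ hθ
  obtain ⟨hθa, hθb⟩ := hθ
  have hθI : θ ∈ Icc a b := ⟨le_of_lt hθa, le_of_lt hθb⟩
  have hnpos : (0:ℝ) < n := by exact_mod_cast hn
  haveI := hprob θ hθI
  -- generic step: if the coverage set is eventually a fixed integer interval,
  -- the one-sided limit exists and dominates `C θ`.
  have main : ∀ (k l : ℤ) (T : Set ℝ),
      Icc a b ∈ nhdsWithin θ T →
      (∀ᶠ θ' in nhdsWithin θ T,
        {m : ℤ | |(m : ℝ) / n - θ'| < ε} = {m : ℤ | k ≤ m ∧ m ≤ l}) →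
      {m : ℤ | |(m : ℝ) / n - θ| < ε} ⊆ {m : ℤ | k ≤ m ∧ m ≤ l} →
      ∃ L : ℝ, Tendsto C (nhdsWithin θ T) (nhds L) ∧ C θ ≤ L := by
    intro k l T hmem heq hsub
    have hle : nhdsWithin θ T ≤ nhdsWithin θ (Icc a b) := nhdsWithin_le_of_mem hmem
    have hg : ContinuousWithinAt
        (fun θ' => (μ θ' {m : ℤ | k ≤ m ∧ m ≤ l}).toReal) (Icc a b) θ := by
      rcases le_or_gt k l with hkl | hkl
      · exact hcont k l hkl θ hθI
      · have hempty : {m : ℤ | k ≤ m ∧ m ≤ l} = (∅ : Set ℤ) := by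
          ext m
          simp only [mem_setOf_eq, mem_empty_iff_false, iff_false, not_and, not_le]
          intro h1
          omega
        simp only [hempty, measure_empty, ENNReal.toReal_zero]
        exact continuousWithinAt_const
    refine ⟨(μ θ {m : ℤ | k ≤ m ∧ m ≤ l}).toReal, ?_, ?_⟩
    · refine Tendsto.congr' ?_ (hg.tendsto.mono_left hle)
      filter_upwards [heq] with θ' h
      simp only [C]
      rw [h]
    · exact ENNReal.toReal_mono (measure_ne_top _ _) (measure_mono hsub)
  constructor
  · -- limit from the right
    set k : ℤ := ⌊(θ - ε) * n⌋ + 1 with hk_def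
    set l : ℤ := ⌊(θ + ε) * n⌋ with hl_def
    have hk : (θ - ε) * n < (k : ℝ) := by
      have := Int.lt_floor_add_one ((θ - ε) * n)
      push_cast [hk_def]
      push_cast at this
      linarith
    have hl : (θ + ε) * n < (l : ℝ) + 1 := by
      have := Int.lt_floor_add_one ((θ + ε) * n)
      push_cast [hl_def]
      push_cast at this
      linarith
    set δ : ℝ := min (((k : ℝ) - (θ - ε) * n) / n) (((l : ℝ) + 1 - (θ + ε) * n) / n) with hδ_def
    have hδ : 0 < δ := lt_min (div_pos (by linarith) hnpos) (div_pos (by linarith) hnpos)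
    have hδ1 : δ * n ≤ (k : ℝ) - (θ - ε) * n := by
      have := min_le_left (((k : ℝ) - (θ - ε) * n) / n) (((l : ℝ) + 1 - (θ + ε) * n) / n)
      rw [← le_div_iff₀ hnpos]
      exact this
    have hδ2 : δ * n ≤ (l : ℝ) + 1 - (θ + ε) * n := by
      have := min_le_right (((k : ℝ) - (θ - ε) * n) / n) (((l : ℝ) + 1 - (θ + ε) * n) / n)
      rw [← le_div_iff₀ hnpos]
      exact this
    refine main k l (Ioi θ) ?_ ?_ ?_
    · refine mem_of_superset (Ioo_mem_nhdsGT_of_mem ⟨le_refl θ, hθb⟩) ?_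
      intro x hx
      exact ⟨le_of_lt (hθa.trans hx.1), le_of_lt hx.2⟩
    · filter_upwards [Ioo_mem_nhdsGT_of_mem (⟨le_refl θ, by linarith⟩ : θ ∈ Ico θ (θ + δ))]
        with θ' hθ'
      obtain ⟨h1, h2⟩ := hθ'
      ext m
      simp only [mem_setOf_eq, cov_mem_iff n hnpos ε θ' m]
      constructor
      · rintro ⟨ha', hb'⟩
        constructor
        · have : ⌊(θ - ε) * n⌋ < m := Int.floor_lt.mpr (by nlinarith)
          omega
        · have hml : (m : ℝ) < (l : ℝ) + 1 := by nlinarith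
          have : (m : ℤ) < l + 1 := by exact_mod_cast (by push_cast; linarith : (m : ℝ) < ((l + 1 : ℤ) : ℝ))
          omega
      · rintro ⟨hk', hl'⟩
        have hkm : (k : ℝ) ≤ (m : ℝ) := by exact_mod_cast hk'
        have hml : (m : ℝ) ≤ (l : ℝ) := by exact_mod_cast hl'
        have hfl : (l : ℝ) ≤ (θ + ε) * n := Int.floor_le _
        constructor
        · nlinarith
        · nlinarith
    · intro m hm
      rw [mem_setOf_eq, cov_mem_iff n hnpos ε θ m] at hm
      constructor
      · have : ⌊(θ - ε) * n⌋ < m := Int.floor_lt.mpr hm.1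
        omega
      · exact Int.le_floor.mpr (le_of_lt hm.2)
  · -- limit from the left
    set k : ℤ := ⌈(θ - ε) * n⌉ with hk_def
    set l : ℤ := ⌈(θ + ε) * n⌉ - 1 with hl_def
    have hk : (k : ℝ) - 1 < (θ - ε) * n := by
      have := Int.ceil_lt_add_one ((θ - ε) * n)
      push_cast [hk_def]
      linarith
    have hl : (l : ℝ) < (θ + ε) * n := by
      have := Int.ceil_lt_add_one ((θ + ε) * n)
      push_cast [hl_def]
      linarith
    set δ : ℝ := min (((θ - ε) * n - ((k : ℝ) - 1)) / n) (((θ + ε) * n - (l : ℝ)) / n) with hδ_def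
    have hδ : 0 < δ := lt_min (div_pos (by linarith) hnpos) (div_pos (by linarith) hnpos)
    have hδ1 : δ * n ≤ (θ - ε) * n - ((k : ℝ) - 1) := by
      have := min_le_left (((θ - ε) * n - ((k : ℝ) - 1)) / n) (((θ + ε) * n - (l : ℝ)) / n)
      rw [← le_div_iff₀ hnpos]
      exact this
    have hδ2 : δ * n ≤ (θ + ε) * n - (l : ℝ) := by
      have := min_le_right (((θ - ε) * n - ((k : ℝ) - 1)) / n) (((θ + ε) * n - (l : ℝ)) / n)
      rw [← le_div_iff₀ hnpos]
      exact this
    refine main k l (Iio θ) ?_ ?_ ?_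
    · refine mem_of_superset (Ioo_mem_nhdsLT_of_mem ⟨hθa, le_refl θ⟩) ?_
      intro x hx
      exact ⟨le_of_lt hx.1, le_of_lt (hx.2.trans hθb)⟩
    · filter_upwards [Ioo_mem_nhdsLT_of_mem (⟨by linarith, le_refl θ⟩ : θ ∈ Ioc (θ - δ) θ)]
        with θ' hθ'
      obtain ⟨h1, h2⟩ := hθ'
      ext m
      simp only [mem_setOf_eq, cov_mem_iff n hnpos ε θ' m]
      constructor
      · rintro ⟨ha', hb'⟩
        constructor
        · have hkm : (k : ℝ) - 1 < (m : ℝ) := by nlinarith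
          have : (k : ℤ) - 1 < m := by exact_mod_cast (by push_cast; linarith : ((k - 1 : ℤ) : ℝ) < (m : ℝ))
          omega
        · have : m < ⌈(θ + ε) * n⌉ := Int.lt_ceil.mpr (by nlinarith)
          omega
      · rintro ⟨hk', hl'⟩
        have hkm : (k : ℝ) ≤ (m : ℝ) := by exact_mod_cast hk'
        have hml : (m : ℝ) ≤ (l : ℝ) := by exact_mod_cast hl'
        have hck : (θ - ε) * n ≤ (k : ℝ) := by
          have := Int.le_ceil ((θ - ε) * n)
          rw [hk_def]
          exact_mod_cast this
        constructor
        · nlinarith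
        · nlinarith
    · intro m hm
      rw [mem_setOf_eq, cov_mem_iff n hnpos ε θ m] at hm
      constructor
      · exact Int.ceil_le.mpr (le_of_lt hm.1)
      · have : m < ⌈(θ + ε) * n⌉ := Int.lt_ceil.mpr hm.2
        omega
end

section
/- Fix a positive integer n, a real ε > 0, reals 0 ≤ a < b, and a family of probability measures μ_θ on ℤ for θ ∈ [a,b] such that for all integers k ≤ l, the map θ ↦ μ_θ({m ∈ ℤ : k ≤ m ≤ l}) is continuous and unimodal on [a,b]. Define C(θ) = μ_θ({m ∈ ℤ : |m/n − θ| < ε}). Let α < β be two elements of [a,b] such that there is no integer ℓ with α < ℓ/n + ε < β and no integer ℓ with α < ℓ/n − ε < β. Then C(θ) ≥ min{C(α), C(β)} for every θ ∈ (α, β). -/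
open MeasureTheory Set

/-- Lemma 5 of Chen & Chen: if `α < β` in `[a,b]` are such that no grid point
`ℓ/n + ε` or `ℓ/n − ε` lies strictly between them, then the coverage
probability `C(θ) = μ_θ{|m/n − θ| < ε}` satisfies
`C(θ) ≥ min(C(α), C(β))` for all `θ ∈ (α, β)`. -/
theorem coverage_lower_bound_between_consecutive_grid_points_absolute
    (n : ℕ) (hn : 0 < n) (ε : ℝ) (hε : 0 < ε)
    (a b : ℝ) (ha : 0 ≤ a) (hab : a < b)
    (μ : ℝ → Measure ℤ)
    (hprob : ∀ θ ∈ Icc a b, IsProbabilityMeasure (μ θ))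
    (hcont : ∀ k l : ℤ, k ≤ l →
      ContinuousOn (fun θ => (μ θ {m : ℤ | k ≤ m ∧ m ≤ l}).toReal) (Icc a b))
    (hunim : ∀ k l : ℤ, k ≤ l → ∃ x ∈ Icc a b,
      MonotoneOn (fun θ => (μ θ {m : ℤ | k ≤ m ∧ m ≤ l}).toReal) (Icc a x) ∧
      AntitoneOn (fun θ => (μ θ {m : ℤ | k ≤ m ∧ m ≤ l}).toReal) (Icc x b))
    (α β : ℝ) (hα : α ∈ Icc a b) (hβ : β ∈ Icc a b) (hαβ : α < β)
    (h1 : ¬∃ ℓ : ℤ, α < (ℓ : ℝ) / n + ε ∧ (ℓ : ℝ) / n + ε < β)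
    (h2 : ¬∃ ℓ : ℤ, α < (ℓ : ℝ) / n - ε ∧ (ℓ : ℝ) / n - ε < β) :
    let C : ℝ → ℝ := fun θ => (μ θ {m : ℤ | |(m : ℝ) / n - θ| < ε}).toReal
    ∀ θ ∈ Ioo α β, min (C α) (C β) ≤ C θ := by
  intro C θ hθ
  obtain ⟨hθ1, hθ2⟩ := hθ
  have hC : ∀ t : ℝ, C t = (μ t {m : ℤ | |(m : ℝ) / n - t| < ε}).toReal := fun _ => rfl
  have hn' : (0:ℝ) < n := by exact_mod_cast hn
  set k : ℤ := ⌈(n:ℝ) * (β - ε)⌉ with hk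
  set l : ℤ := ⌊(n:ℝ) * (α + ε)⌋ with hl
  have hmem : ∀ m : ℤ, (k ≤ m ∧ m ≤ l) ↔ (β - ε ≤ (m:ℝ)/n ∧ (m:ℝ)/n ≤ α + ε) := by
    intro m
    rw [hk, hl, Int.ceil_le, Int.le_floor]
    constructor
    · rintro ⟨h1', h2'⟩
      constructor
      · rw [le_div_iff₀ hn']; nlinarith
      · rw [div_le_iff₀ hn']; nlinarith
    · rintro ⟨h1', h2'⟩
      rw [le_div_iff₀ hn'] at h1'
      rw [div_le_iff₀ hn'] at h2'
      constructor <;> nlinarith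
  -- the coverage set at θ equals the fixed integer interval
  have hSθ : {m : ℤ | |(m : ℝ) / n - θ| < ε} = {m : ℤ | k ≤ m ∧ m ≤ l} := by
    ext m
    simp only [mem_setOf_eq, abs_lt, hmem m]
    constructor
    · rintro ⟨hlo, hhi⟩
      constructor
      · by_contra hcon; push_neg at hcon
        exact h1 ⟨m, by linarith, by linarith⟩
      · by_contra hcon; push_neg at hcon
        exact h2 ⟨m, by linarith, by linarith⟩
    · rintro ⟨h1', h2'⟩
      exact ⟨by linarith, by linarith⟩
  have hSα : {m : ℤ | |(m : ℝ) / n - α| < ε} ⊆ {m : ℤ | k ≤ m ∧ m ≤ l} := by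
    intro m hm
    simp only [mem_setOf_eq, abs_lt] at hm
    obtain ⟨hlo, hhi⟩ := hm
    rw [mem_setOf_eq, hmem m]
    constructor
    · by_contra hcon; push_neg at hcon
      exact h1 ⟨m, by linarith, by linarith⟩
    · linarith
  have hSβ : {m : ℤ | |(m : ℝ) / n - β| < ε} ⊆ {m : ℤ | k ≤ m ∧ m ≤ l} := by
    intro m hm
    simp only [mem_setOf_eq, abs_lt] at hm
    obtain ⟨hlo, hhi⟩ := hm
    rw [mem_setOf_eq, hmem m]
    constructor
    · linarith
    · by_contra hcon; push_neg at hcon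
      exact h2 ⟨m, by linarith, by linarith⟩
  have hθab : θ ∈ Icc a b := ⟨hα.1.trans hθ1.le, hθ2.le.trans hβ.2⟩
  haveI := hprob α hα
  haveI := hprob β hβ
  have hCα : C α ≤ (μ α {m : ℤ | k ≤ m ∧ m ≤ l}).toReal := by
    rw [hC α]
    exact ENNReal.toReal_mono (measure_ne_top _ _) (measure_mono hSα)
  have hCβ : C β ≤ (μ β {m : ℤ | k ≤ m ∧ m ≤ l}).toReal := by
    rw [hC β]
    exact ENNReal.toReal_mono (measure_ne_top _ _) (measure_mono hSβ)
  have hCθ : C θ = (μ θ {m : ℤ | k ≤ m ∧ m ≤ l}).toReal := by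
    rw [hC θ, hSθ]
  by_cases hkl : k ≤ l
  · obtain ⟨x, hx, hmono, hanti⟩ := hunim k l hkl
    rcases le_total θ x with hx1 | hx1
    · have hαmem : α ∈ Icc a x := ⟨hα.1, le_trans hθ1.le hx1⟩
      have hθmem : θ ∈ Icc a x := ⟨hθab.1, hx1⟩
      have := hmono hαmem hθmem hθ1.le
      calc min (C α) (C β) ≤ C α := min_le_left _ _
        _ ≤ (μ α {m : ℤ | k ≤ m ∧ m ≤ l}).toReal := hCα
        _ ≤ (μ θ {m : ℤ | k ≤ m ∧ m ≤ l}).toReal := this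
        _ = C θ := hCθ.symm
    · have hβmem : β ∈ Icc x b := ⟨le_trans hx1 hθ2.le, hβ.2⟩
      have hθmem : θ ∈ Icc x b := ⟨hx1, hθab.2⟩
      have := hanti hθmem hβmem hθ2.le
      calc min (C α) (C β) ≤ C β := min_le_right _ _
        _ ≤ (μ β {m : ℤ | k ≤ m ∧ m ≤ l}).toReal := hCβ
        _ ≤ (μ θ {m : ℤ | k ≤ m ∧ m ≤ l}).toReal := this
        _ = C θ := hCθ.symm
  · have hempty : {m : ℤ | k ≤ m ∧ m ≤ l} = (∅ : Set ℤ) := by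
      ext m
      simp only [mem_setOf_eq, mem_empty_iff_false, iff_false, not_and, not_le]
      intro h; omega
    have hθ0 : C θ = 0 := by rw [hCθ, hempty]; simp
    have hα0 : C α ≤ 0 := by rw [hempty] at hCα; simpa using hCα
    rw [hθ0]
    exact le_trans (min_le_left _ _) hα0
end

section
/- Fix a positive integer n, a real ε with 0 < ε < 1, reals 0 < a < b, and a family of probability measures μ_θ on ℤ for θ ∈ [a,b] such that for all integers k ≤ l, the map θ ↦ μ_θ({m ∈ ℤ : k ≤ m ≤ l}) is continuous on [a,b]. Define C(θ) = μ_θ({m ∈ ℤ : |m/n − θ| < ε·θ}). Then for every θ ∈ (a,b), the one-sided limit lim_{η→0⁺} C(θ + η) exists and is ≥ C(θ), and the one-sided limit lim_{η→0⁺} C(θ − η) exists and is ≥ C(θ). -/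
open MeasureTheory Set Filter

lemma cov_set_eq (n : ℕ) (hn : 0 < n) (ε θ' : ℝ) :
    {m : ℤ | |(m : ℝ) / n - θ'| < ε * θ'} =
    {m : ℤ | ⌊(n : ℝ) * θ' * (1 - ε)⌋ + 1 ≤ m ∧ m ≤ ⌈(n : ℝ) * θ' * (1 + ε)⌉ - 1} := by
  have hn' : (0:ℝ) < n := by exact_mod_cast hn
  ext m
  simp only [mem_setOf_eq, abs_lt, Int.add_one_le_iff, Int.le_sub_one_iff,
    Int.floor_lt, Int.lt_ceil]
  have hm : ((m:ℝ)/n) * n = m := div_mul_cancel₀ _ (ne_of_gt hn')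
  constructor
  · rintro ⟨h1, h2⟩
    constructor <;> nlinarith
  · rintro ⟨h1, h2⟩
    constructor <;> nlinarith

lemma cov_side_limit (n : ℕ) (hn : 0 < n) (ε : ℝ)
    (a b : ℝ) (μ : ℝ → Measure ℤ)
    (hprob : ∀ θ ∈ Icc a b, IsProbabilityMeasure (μ θ))
    (hcont : ∀ k l : ℤ, k ≤ l →
      ContinuousOn (fun θ => (μ θ {m : ℤ | k ≤ m ∧ m ≤ l}).toReal) (Icc a b))
    (θ : ℝ) (hθ : θ ∈ Icc a b) (k l : ℤ) (s : Set ℝ)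
    (hs : Icc a b ∈ nhdsWithin θ s)
    (heq : ∀ᶠ θ' in nhdsWithin θ s,
      {m : ℤ | |(m : ℝ) / n - θ'| < ε * θ'} = {m : ℤ | k ≤ m ∧ m ≤ l})
    (hsub : {m : ℤ | |(m : ℝ) / n - θ| < ε * θ} ⊆ {m : ℤ | k ≤ m ∧ m ≤ l}) :
    ∃ L : ℝ, Tendsto (fun θ' => (μ θ' {m : ℤ | |(m : ℝ) / n - θ'| < ε * θ'}).toReal)
        (nhdsWithin θ s) (nhds L) ∧
      (μ θ {m : ℤ | |(m : ℝ) / n - θ| < ε * θ}).toReal ≤ L := by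
  haveI := hprob θ hθ
  refine ⟨(μ θ {m : ℤ | k ≤ m ∧ m ≤ l}).toReal, ?_, ?_⟩
  · have hf : Tendsto (fun θ' => (μ θ' {m : ℤ | k ≤ m ∧ m ≤ l}).toReal)
        (nhdsWithin θ s) (nhds ((μ θ {m : ℤ | k ≤ m ∧ m ≤ l}).toReal)) := by
      by_cases hkl : k ≤ l
      · exact (hcont k l hkl θ hθ).mono_left (nhdsWithin_le_iff.mpr hs)
      · have hTe : {m : ℤ | k ≤ m ∧ m ≤ l} = (∅ : Set ℤ) := by
          ext m; simp only [mem_setOf_eq, mem_empty_iff_false, iff_false, not_and]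
          omega
        simp only [hTe, measure_empty, ENNReal.toReal_zero]
        exact tendsto_const_nhds
    refine hf.congr' (heq.mono fun θ' h => ?_)
    show _ = (μ θ' _).toReal
    rw [h]
  · exact ENNReal.toReal_mono (measure_ne_top _ _) (measure_mono hsub)

/-- Lemma 9 of Chen & Chen: if for all integers `k ≤ l` the interval
probability `θ ↦ μ_θ{k ≤ m ≤ l}` is continuous on `[a,b]`, then the coverage
probability `C(θ) = μ_θ{|m/n − θ| < εθ}` has one-sided limits from the right
and from the left at every `θ ∈ (a,b)`, both of which are `≥ C(θ)`. -/
theorem coverage_one_sided_limits_relative_error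
    (n : ℕ) (hn : 0 < n) (ε : ℝ) (hε0 : 0 < ε) (hε1 : ε < 1)
    (a b : ℝ) (ha : 0 < a) (hab : a < b)
    (μ : ℝ → Measure ℤ)
    (hprob : ∀ θ ∈ Icc a b, IsProbabilityMeasure (μ θ))
    (hcont : ∀ k l : ℤ, k ≤ l →
      ContinuousOn (fun θ => (μ θ {m : ℤ | k ≤ m ∧ m ≤ l}).toReal) (Icc a b)) :
    let C : ℝ → ℝ := fun θ => (μ θ {m : ℤ | |(m : ℝ) / n - θ| < ε * θ}).toReal
    ∀ θ ∈ Ioo a b,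
      (∃ L : ℝ, Tendsto C (nhdsWithin θ (Ioi θ)) (nhds L) ∧ C θ ≤ L) ∧
      (∃ L : ℝ, Tendsto C (nhdsWithin θ (Iio θ)) (nhds L) ∧ C θ ≤ L) := by
  intro C θ hθ
  have hn' : (0:ℝ) < n := by exact_mod_cast hn
  have hθab : θ ∈ Icc a b := ⟨le_of_lt hθ.1, le_of_lt hθ.2⟩
  set y₁ : ℝ := (n : ℝ) * θ * (1 - ε) with hy₁
  set y₂ : ℝ := (n : ℝ) * θ * (1 + ε) with hy₂
  have hc1 : Continuous fun θ' : ℝ => (n : ℝ) * θ' * (1 - ε) := by continuity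
  have hc2 : Continuous fun θ' : ℝ => (n : ℝ) * θ' * (1 + ε) := by continuity
  constructor
  · -- right-hand limit
    have hsIcc : Icc a b ∈ nhdsWithin θ (Ioi θ) := by
      refine mem_of_superset (Ioo_mem_nhdsGT_of_mem ⟨le_refl θ, hθ.2⟩) ?_
      exact fun x hx => ⟨le_of_lt (hθ.1.trans hx.1), le_of_lt hx.2⟩
    refine cov_side_limit n hn ε a b μ hprob hcont θ hθab (⌊y₁⌋ + 1) ⌊y₂⌋ _ hsIcc ?_ ?_
    · -- eventual set equality on the right
      have h1 : ∀ᶠ θ' in nhdsWithin θ (Ioi θ),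
          (n : ℝ) * θ' * (1 - ε) < (⌊y₁⌋ : ℝ) + 1 :=
        eventually_nhdsWithin_of_eventually_nhds
          (((hc1.tendsto θ).eventually_lt_const (Int.lt_floor_add_one y₁)))
      have h2 : ∀ᶠ θ' in nhdsWithin θ (Ioi θ),
          (n : ℝ) * θ' * (1 + ε) < (⌊y₂⌋ : ℝ) + 1 :=
        eventually_nhdsWithin_of_eventually_nhds
          (((hc2.tendsto θ).eventually_lt_const (Int.lt_floor_add_one y₂)))
      filter_upwards [h1, h2, self_mem_nhdsWithin] with θ' h1' h2' hθ'
      have hθ'θ : θ < θ' := hθ'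
      have h1ε : (0:ℝ) < 1 - ε := by linarith
      have h2ε : (0:ℝ) < 1 + ε := by linarith
      have hx1 : y₁ < (n : ℝ) * θ' * (1 - ε) := by
        rw [hy₁]
        have := mul_lt_mul_of_pos_right (mul_lt_mul_of_pos_left hθ'θ hn') h1ε
        linarith
      have hx2 : y₂ < (n : ℝ) * θ' * (1 + ε) := by
        rw [hy₂]
        have := mul_lt_mul_of_pos_right (mul_lt_mul_of_pos_left hθ'θ hn') h2ε
        linarith
      have hf1 : ⌊(n : ℝ) * θ' * (1 - ε)⌋ = ⌊y₁⌋ := by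
        rw [Int.floor_eq_iff]
        exact ⟨(Int.floor_le y₁).trans hx1.le, by push_cast; exact h1'⟩
      have hf2 : ⌈(n : ℝ) * θ' * (1 + ε)⌉ = ⌊y₂⌋ + 1 := by
        rw [Int.ceil_eq_iff]
        constructor
        · push_cast
          have := Int.floor_le y₂
          linarith
        · push_cast; linarith
      rw [cov_set_eq n hn ε θ', hf1, hf2]
      ext m
      simp only [mem_setOf_eq]
      omega
    · -- inclusion at θ
      rw [cov_set_eq n hn ε θ, ← hy₁, ← hy₂]
      intro m hm
      refine ⟨hm.1, hm.2.trans ?_⟩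
      have := Int.ceil_le_floor_add_one y₂
      omega
  · -- left-hand limit
    have hsIcc : Icc a b ∈ nhdsWithin θ (Iio θ) := by
      refine mem_of_superset (Ioo_mem_nhdsLT_of_mem ⟨hθ.1, le_refl θ⟩) ?_
      exact fun x hx => ⟨le_of_lt hx.1, le_of_lt (hx.2.trans hθ.2)⟩
    refine cov_side_limit n hn ε a b μ hprob hcont θ hθab ⌈y₁⌉ (⌈y₂⌉ - 1) _ hsIcc ?_ ?_
    · have h1 : ∀ᶠ θ' in nhdsWithin θ (Iio θ),
          ((⌈y₁⌉ : ℝ) - 1) < (n : ℝ) * θ' * (1 - ε) :=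
        eventually_nhdsWithin_of_eventually_nhds
          (((hc1.tendsto θ).eventually_const_lt
            (by have := Int.ceil_lt_add_one y₁; linarith)))
      have h2 : ∀ᶠ θ' in nhdsWithin θ (Iio θ),
          ((⌈y₂⌉ : ℝ) - 1) < (n : ℝ) * θ' * (1 + ε) :=
        eventually_nhdsWithin_of_eventually_nhds
          (((hc2.tendsto θ).eventually_const_lt
            (by have := Int.ceil_lt_add_one y₂; linarith)))
      filter_upwards [h1, h2, self_mem_nhdsWithin] with θ' h1' h2' hθ'
      have hθ'θ : θ' < θ := hθ'
      have h1ε : (0:ℝ) < 1 - ε := by linarith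
      have h2ε : (0:ℝ) < 1 + ε := by linarith
      have hx1 : (n : ℝ) * θ' * (1 - ε) < y₁ := by
        rw [hy₁]
        have := mul_lt_mul_of_pos_right (mul_lt_mul_of_pos_left hθ'θ hn') h1ε
        linarith
      have hx2 : (n : ℝ) * θ' * (1 + ε) < y₂ := by
        rw [hy₂]
        have := mul_lt_mul_of_pos_right (mul_lt_mul_of_pos_left hθ'θ hn') h2ε
        linarith
      have hf1 : ⌊(n : ℝ) * θ' * (1 - ε)⌋ = ⌈y₁⌉ - 1 := by
        rw [Int.floor_eq_iff]
        constructor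
        · push_cast; exact h1'.le
        · push_cast
          have := Int.le_ceil y₁
          linarith
      have hf2 : ⌈(n : ℝ) * θ' * (1 + ε)⌉ = ⌈y₂⌉ := by
        rw [Int.ceil_eq_iff]
        constructor
        · push_cast; exact h2'
        · exact hx2.le.trans (Int.le_ceil y₂)
      rw [cov_set_eq n hn ε θ', hf1, hf2]
      ext m
      simp only [mem_setOf_eq]
      omega
    · rw [cov_set_eq n hn ε θ, ← hy₁, ← hy₂]
      intro m hm
      refine ⟨le_trans ?_ hm.1, hm.2⟩
      have := Int.ceil_le_floor_add_one y₁
      omega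
end

section
/- Fix a positive integer n, a real ε with 0 < ε < 1, reals 0 < a < b, and a family of probability measures μ_θ on ℤ for θ ∈ [a,b] such that for all integers k ≤ l, the map θ ↦ μ_θ({m ∈ ℤ : k ≤ m ≤ l}) is continuous and unimodal on [a,b]. Define C(θ) = μ_θ({m ∈ ℤ : |m/n − θ| < ε·θ}). Let α < β be two elements of [a,b] such that there is no integer ℓ with α < ℓ/(n(1−ε)) < β and no integer ℓ with α < ℓ/(n(1+ε)) < β. Then C(θ) ≥ min{C(α), C(β)} for every θ ∈ (α, β). -/
open MeasureTheory Set

/-- Lemma 10 of Chen & Chen: if `α < β` in `[a,b]` are such that no grid point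
`ℓ/(n(1−ε))` or `ℓ/(n(1+ε))` lies strictly between them, then the coverage
probability `C(θ) = μ_θ{|m/n − θ| < εθ}` satisfies
`C(θ) ≥ min(C(α), C(β))` for all `θ ∈ (α, β)`. -/
theorem coverage_lower_bound_between_consecutive_grid_points_relative
    (n : ℕ) (hn : 0 < n) (ε : ℝ) (hε0 : 0 < ε) (hε1 : ε < 1)
    (a b : ℝ) (ha : 0 < a) (hab : a < b)
    (μ : ℝ → Measure ℤ)
    (hprob : ∀ θ ∈ Icc a b, IsProbabilityMeasure (μ θ))
    (hcont : ∀ k l : ℤ, k ≤ l →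
      ContinuousOn (fun θ => (μ θ {m : ℤ | k ≤ m ∧ m ≤ l}).toReal) (Icc a b))
    (hunim : ∀ k l : ℤ, k ≤ l → ∃ x ∈ Icc a b,
      MonotoneOn (fun θ => (μ θ {m : ℤ | k ≤ m ∧ m ≤ l}).toReal) (Icc a x) ∧
      AntitoneOn (fun θ => (μ θ {m : ℤ | k ≤ m ∧ m ≤ l}).toReal) (Icc x b))
    (α β : ℝ) (hα : α ∈ Icc a b) (hβ : β ∈ Icc a b) (hαβ : α < β)
    (h1 : ¬∃ ℓ : ℤ, α < (ℓ : ℝ) / (n * (1 - ε)) ∧ (ℓ : ℝ) / (n * (1 - ε)) < β)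
    (h2 : ¬∃ ℓ : ℤ, α < (ℓ : ℝ) / (n * (1 + ε)) ∧ (ℓ : ℝ) / (n * (1 + ε)) < β) :
    let C : ℝ → ℝ := fun θ => (μ θ {m : ℤ | |(m : ℝ) / n - θ| < ε * θ}).toReal
    ∀ θ ∈ Ioo α β, min (C α) (C β) ≤ C θ := by
  intro C θ hθ
  have hn' : (0:ℝ) < n := by exact_mod_cast hn
  have hA : (0:ℝ) < n * (1 - ε) := mul_pos hn' (by linarith)
  have hB : (0:ℝ) < n * (1 + ε) := mul_pos hn' (by linarith)
  have hα0 : 0 < α := lt_of_lt_of_le ha hα.1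
  have hβ0 : 0 < β := lt_of_lt_of_le ha hβ.1
  have hθ0 : 0 < θ := lt_trans hα0 hθ.1
  have hθab : θ ∈ Icc a b := ⟨le_trans hα.1 (le_of_lt hθ.1), le_trans (le_of_lt hθ.2) hβ.2⟩
  push_neg at h1 h2
  have g1 : ∀ m : ℤ, α < (m:ℝ) / (n * (1 - ε)) → β ≤ (m:ℝ) / (n * (1 - ε)) := h1
  have g2 : ∀ m : ℤ, (m:ℝ) / (n * (1 + ε)) < β → (m:ℝ) / (n * (1 + ε)) ≤ α := by
    intro m hm
    by_contra h
    exact absurd hm (not_lt.mpr (h2 m (lt_of_not_ge h)))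
  set k : ℤ := ⌈(n * (1 - ε)) * β⌉ with hk
  set l : ℤ := ⌊(n * (1 + ε)) * α⌋ with hl
  have hmem : ∀ θ' : ℝ, 0 < θ' → ∀ m : ℤ,
      (|(m:ℝ) / n - θ'| < ε * θ' ↔ (n * (1 - ε)) * θ' < m ∧ (m:ℝ) < (n * (1 + ε)) * θ') := by
    intro θ' hθ' m
    rw [abs_lt]
    have hm : (m:ℝ) = ((m:ℝ) / n) * n := (div_mul_cancel₀ _ (ne_of_gt hn')).symm
    constructor
    · rintro ⟨hlo, hhi⟩
      constructor <;> nlinarith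
    · rintro ⟨hlo, hhi⟩
      constructor <;> nlinarith
  -- coverage set at any θ' ∈ [α, β] is contained in the integer interval [k, l]
  have hsub : ∀ θ' : ℝ, α ≤ θ' → θ' ≤ β → 0 < θ' →
      {m : ℤ | |(m:ℝ) / n - θ'| < ε * θ'} ⊆ {m : ℤ | k ≤ m ∧ m ≤ l} := by
    intro θ' hθ1 hθ2 hθ' m hm
    rw [mem_setOf_eq, hmem θ' hθ' m] at hm
    obtain ⟨hlo, hhi⟩ := hm
    constructor
    · have hgt : α < (m:ℝ) / (n * (1 - ε)) := by
        rw [lt_div_iff₀ hA]; nlinarith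
      have hge := g1 m hgt
      rw [le_div_iff₀ hA] at hge
      exact Int.ceil_le.mpr (by linarith)
    · have hlt : (m:ℝ) / (n * (1 + ε)) < β := by
        rw [div_lt_iff₀ hB]; nlinarith
      have hle := g2 m hlt
      rw [div_le_iff₀ hB] at hle
      exact Int.le_floor.mpr (by linarith)
  -- on the open interval the coverage set equals the integer interval
  have hsup : {m : ℤ | k ≤ m ∧ m ≤ l} ⊆ {m : ℤ | |(m:ℝ) / n - θ| < ε * θ} := by
    rintro m ⟨hk', hl'⟩
    have hAβ : (n * (1 - ε)) * β ≤ m := Int.ceil_le.mp hk'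
    have hBα : (m:ℝ) ≤ (n * (1 + ε)) * α := Int.le_floor.mp hl'
    rw [mem_setOf_eq, hmem θ hθ0 m]
    constructor <;> nlinarith [hθ.1, hθ.2]
  have hseteq : {m : ℤ | |(m:ℝ) / n - θ| < ε * θ} = {m : ℤ | k ≤ m ∧ m ≤ l} :=
    Subset.antisymm (hsub θ (le_of_lt hθ.1) (le_of_lt hθ.2) hθ0) hsup
  show min ((μ α {m : ℤ | |(m : ℝ) / n - α| < ε * α}).toReal)
      ((μ β {m : ℤ | |(m : ℝ) / n - β| < ε * β}).toReal)
      ≤ (μ θ {m : ℤ | |(m : ℝ) / n - θ| < ε * θ}).toReal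
  rw [hseteq]
  by_cases hkl : k ≤ l
  · obtain ⟨x, hx, hmono, hanti⟩ := hunim k l hkl
    haveI := hprob α hα
    haveI := hprob β hβ
    have hCα : (μ α {m : ℤ | |(m : ℝ) / n - α| < ε * α}).toReal
        ≤ (μ α {m : ℤ | k ≤ m ∧ m ≤ l}).toReal :=
      ENNReal.toReal_mono (measure_ne_top _ _)
        (measure_mono (hsub α le_rfl (le_of_lt hαβ) hα0))
    have hCβ : (μ β {m : ℤ | |(m : ℝ) / n - β| < ε * β}).toReal
        ≤ (μ β {m : ℤ | k ≤ m ∧ m ≤ l}).toReal :=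
      ENNReal.toReal_mono (measure_ne_top _ _)
        (measure_mono (hsub β (le_of_lt hαβ) le_rfl hβ0))
    rcases le_or_gt θ x with hcase | hcase
    · have := hmono ⟨hα.1, le_trans (le_of_lt hθ.1) hcase⟩ ⟨hθab.1, hcase⟩ (le_of_lt hθ.1)
      exact le_trans (min_le_left _ _) (le_trans hCα this)
    · have := hanti ⟨le_of_lt hcase, hθab.2⟩ ⟨le_trans (le_of_lt hcase) (le_of_lt hθ.2), hβ.2⟩
        (le_of_lt hθ.2)
      exact le_trans (min_le_right _ _) (le_trans hCβ this)
  · have hempty : {m : ℤ | k ≤ m ∧ m ≤ l} = (∅ : Set ℤ) := by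
      ext m
      simp only [mem_setOf_eq, mem_empty_iff_false, iff_false, not_and, not_le]
      intro hkm
      omega
    have hCα0 : (μ α {m : ℤ | |(m : ℝ) / n - α| < ε * α}).toReal = 0 := by
      have : μ α {m : ℤ | |(m : ℝ) / n - α| < ε * α} = 0 := by
        refine measure_mono_null (hsub α le_rfl (le_of_lt hαβ) hα0) ?_
        rw [hempty]; exact measure_empty
      simp [this]
    refine le_trans (le_trans (min_le_left _ _) (le_of_eq hCα0)) ENNReal.toReal_nonneg
end

section
/- Let 0 < a < b and 0 < ε < 1 be real numbers with a/(1−ε) ≤ b/(1+ε). For a real number x, let r(x) = min(b, max(a, x)) denote its clamp to [a,b]. Then for every real x: (i) if θ ∈ [a/(1−ε), b/(1+ε)], then |r(x) − θ| ≥ ε·θ if and only if |x − θ| ≥ ε·θ; (ii) if θ ∈ [a, a/(1−ε)), then |r(x) − θ| ≥ ε·θ if and only if x ≥ (1+ε)θ; (iii) if θ ∈ (b/(1+ε), b], then |r(x) − θ| ≥ ε·θ if and only if x ≤ (1−ε)θ. -/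
open Set

private lemma abs_key (ε θ y : ℝ) :
    ε * θ ≤ |y - θ| ↔ (1 + ε) * θ ≤ y ∨ y ≤ (1 - ε) * θ := by
  rw [le_abs]
  constructor
  · rintro (h | h)
    · left; nlinarith
    · right; nlinarith
  · rintro (h | h)
    · left; nlinarith
    · right; nlinarith

/-- Lemma 13 of Chen & Chen: event identities for the deviation of the clamped
(range-preserving) estimate `r(x) = min(b, max(a, x))` under relative error,
in the case `a/(1−ε) ≤ b/(1+ε)`. -/
theorem clamp_deviation_events_relative_wide
    (a b ε : ℝ) (ha : 0 < a) (hab : a < b) (hε0 : 0 < ε) (hε1 : ε < 1)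
    (h : a / (1 - ε) ≤ b / (1 + ε)) :
    ∀ x θ : ℝ,
      (θ ∈ Icc (a / (1 - ε)) (b / (1 + ε)) →
        (ε * θ ≤ |min b (max a x) - θ| ↔ ε * θ ≤ |x - θ|)) ∧
      (θ ∈ Ico a (a / (1 - ε)) →
        (ε * θ ≤ |min b (max a x) - θ| ↔ (1 + ε) * θ ≤ x)) ∧
      (θ ∈ Ioc (b / (1 + ε)) b →
        (ε * θ ≤ |min b (max a x) - θ| ↔ x ≤ (1 - ε) * θ)) := by
  have h1ε : (0:ℝ) < 1 - ε := by linarith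
  have h1ε' : (0:ℝ) < 1 + ε := by linarith
  have hb : (0:ℝ) < b := lt_trans ha hab
  intro x θ
  rcases le_total x a with hx | hx
  · -- clamp = a
    have hr : min b (max a x) = a := by
      rw [max_eq_left hx, min_eq_right hab.le]
    rw [hr, abs_key, abs_key]
    refine ⟨?_, ?_, ?_⟩
    · rintro ⟨hθ1, hθ2⟩
      have h1 : a ≤ (1 - ε) * θ := by rw [div_le_iff₀ h1ε] at hθ1; linarith
      constructor
      · intro _; right; linarith
      · intro _; right; exact h1
    · rintro ⟨hθ1, hθ2⟩
      have hθ0 : 0 < θ := lt_of_lt_of_le ha hθ1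
      have h1 : (1 - ε) * θ < a := by rw [lt_div_iff₀ h1ε] at hθ2; linarith
      constructor
      · rintro (h' | h') <;> nlinarith
      · intro h'; nlinarith
    · rintro ⟨hθ1, hθ2⟩
      have hθ0 : 0 < θ := lt_trans (by positivity) hθ1
      have h1 : a ≤ (1 - ε) * θ := by
        have := le_trans h hθ1.le
        rw [div_le_iff₀ h1ε] at this; linarith
      constructor
      · intro _; linarith
      · intro _; right; exact h1
  · rcases le_total x b with hx' | hx'
    · -- clamp = x
      have hr : min b (max a x) = x := by
        rw [max_eq_right hx, min_eq_right hx']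
      rw [hr, abs_key]
      refine ⟨?_, ?_, ?_⟩
      · intro _; exact Iff.rfl
      · rintro ⟨hθ1, hθ2⟩
        have hθ0 : 0 < θ := lt_of_lt_of_le ha hθ1
        have h1 : (1 - ε) * θ < a := by rw [lt_div_iff₀ h1ε] at hθ2; linarith
        constructor
        · rintro (h' | h')
          · exact h'
          · nlinarith
        · intro h'; left; exact h'
      · rintro ⟨hθ1, hθ2⟩
        have hθ0 : 0 < θ := lt_trans (by positivity) hθ1
        have h2 : b < (1 + ε) * θ := by rw [div_lt_iff₀ h1ε'] at hθ1; linarith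
        constructor
        · rintro (h' | h')
          · nlinarith
          · exact h'
        · intro h'; right; exact h'
    · -- clamp = b
      have hr : min b (max a x) = b := by
        rw [max_eq_right hx, min_eq_left hx']
      rw [hr, abs_key, abs_key]
      refine ⟨?_, ?_, ?_⟩
      · rintro ⟨hθ1, hθ2⟩
        have h2 : (1 + ε) * θ ≤ b := by rw [le_div_iff₀ h1ε'] at hθ2; linarith
        constructor
        · intro _; left; linarith
        · intro _; left; exact h2
      · rintro ⟨hθ1, hθ2⟩
        have hθ0 : 0 < θ := lt_of_lt_of_le ha hθ1
        have h2 : (1 + ε) * θ < b := by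
          have := lt_of_lt_of_le hθ2 h
          rw [lt_div_iff₀ h1ε'] at this; linarith
        constructor
        · intro _; linarith
        · intro _; left; exact h2.le
      · rintro ⟨hθ1, hθ2⟩
        have hθ0 : 0 < θ := lt_trans (by positivity) hθ1
        have h2 : b < (1 + ε) * θ := by rw [div_lt_iff₀ h1ε'] at hθ1; linarith
        constructor
        · rintro (h' | h') <;> nlinarith
        · intro h'; nlinarith
end
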